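/- arXiv:2106.00092 — 3 statements merged into one kernel-verified Lean document; each statement's English description precedes it below -/
import Mathlib

section
/- Let 0 < λ₂ < λ₁ < 1, let f : ℝ^d → ℝ be continuously differentiable and bounded below by 0, set α(t) = (1-(1-λ₁)^t)/√(1-(1-λ₂)^t), and let (μ, v, x) : [1,∞) → ℝ^d × ℝ^d × ℝ^d solve μ̇ᵢ = -λ₁ μᵢ + λ₁ ∇ᵢf(x), v̇ᵢ = -λ₂ vᵢ + λ₂ (∇ᵢf(x))², ẋᵢ = -(1/α(t)) μᵢ/√(vᵢ) with μ(1) = 0 and vᵢ(1) > 0 for all i. Let T ≥ 1 be such that α'(t) < 0 for all t ≥ T. Then the function t ↦ α(t) f(x(t)) + Σᵢ μᵢ(t)²/(2λ₁√(vᵢ(t))) is nonincreasing on [T,∞). -/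
open Real Filter

/-- Lyapunov monotonicity for continuous-time Adam: once the bias-correction
factor `α` is strictly decreasing (`α'(t) < 0` for `t ≥ T`), the function
`t ↦ α(t) f(x(t)) + Σᵢ μᵢ(t)²/(2λ₁√(vᵢ(t)))` is nonincreasing on `[T,∞)`. -/
theorem adam_lyapunov_antitone
    (d : ℕ) (lam₁ lam₂ : ℝ)
    (hlam₂ : 0 < lam₂) (hlam₁₂ : lam₂ < lam₁) (hlam₁ : lam₁ < 1)
    (f : EuclideanSpace ℝ (Fin d) → ℝ)
    (hf : ContDiff ℝ 1 f) (hf0 : ∀ y, 0 ≤ f y)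
    (α : ℝ → ℝ)
    (hα : ∀ t : ℝ, α t = (1 - (1 - lam₁) ^ t) / Real.sqrt (1 - (1 - lam₂) ^ t))
    (μ v x : ℝ → EuclideanSpace ℝ (Fin d))
    (hμ : ∀ t ≥ (1 : ℝ), ∀ i : Fin d, HasDerivAt (fun s => μ s i)
      (-lam₁ * μ t i + lam₁ * gradient f (x t) i) t)
    (hv : ∀ t ≥ (1 : ℝ), ∀ i : Fin d, HasDerivAt (fun s => v s i)
      (-lam₂ * v t i + lam₂ * (gradient f (x t) i) ^ 2) t)
    (hx : ∀ t ≥ (1 : ℝ), ∀ i : Fin d, HasDerivAt (fun s => x s i)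
      (-(1 / α t) * (μ t i / Real.sqrt (v t i))) t)
    (hμ1 : μ 1 = 0) (hv1 : ∀ i : Fin d, 0 < v 1 i)
    (T : ℝ) (hT : 1 ≤ T) (hαdec : ∀ t ≥ T, deriv α t < 0) :
    AntitoneOn
      (fun t => α t * f (x t) + ∑ i : Fin d, μ t i ^ 2 / (2 * lam₁ * Real.sqrt (v t i)))
      (Set.Ici T) := by
  have hlam₁pos : 0 < lam₁ := lt_trans hlam₂ hlam₁₂
  have hb₁ : (0:ℝ) < 1 - lam₁ := by linarith
  have hb₂ : (0:ℝ) < 1 - lam₂ := by linarith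
  -- Positivity of v on [1, ∞)
  have hvpos : ∀ t ≥ (1:ℝ), ∀ i : Fin d, 0 < v t i := by
    intro t ht i
    have hwderiv : ∀ s ≥ (1:ℝ), HasDerivAt (fun s => v s i * Real.exp (lam₂ * s))
        (lam₂ * (gradient f (x s) i) ^ 2 * Real.exp (lam₂ * s)) s := by
      intro s hs
      have hexp : HasDerivAt (fun s : ℝ => Real.exp (lam₂ * s))
          (lam₂ * Real.exp (lam₂ * s)) s := by
        simpa [mul_comm] using (((hasDerivAt_id s).const_mul lam₂).exp)
      have h1 : HasDerivAt (fun s => v s i * Real.exp (lam₂ * s))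
          ((-lam₂ * v s i + lam₂ * (gradient f (x s) i) ^ 2) * Real.exp (lam₂ * s)
            + v s i * (lam₂ * Real.exp (lam₂ * s))) s := (hv s hs i).mul hexp
      convert h1 using 1
      ring
    have hmono : MonotoneOn (fun s => v s i * Real.exp (lam₂ * s)) (Set.Ici 1) := by
      apply monotoneOn_of_deriv_nonneg (convex_Ici 1)
      · exact fun s hs => ((hwderiv s hs).continuousAt).continuousWithinAt
      · intro s hs
        rw [interior_Ici] at hs
        exact ((hwderiv s (le_of_lt hs)).differentiableAt).differentiableWithinAt
      · intro s hs
        rw [interior_Ici] at hs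
        rw [(hwderiv s (le_of_lt hs)).deriv]
        positivity
    have h1t : v 1 i * Real.exp (lam₂ * 1) ≤ v t i * Real.exp (lam₂ * t) :=
      hmono (by simp) ht ht
    have hpos : 0 < v t i * Real.exp (lam₂ * t) := by
      have := hv1 i
      nlinarith [Real.exp_pos (lam₂ * 1)]
    nlinarith [Real.exp_pos (lam₂ * t)]
  -- basic facts about α on [1, ∞)
  have hq : ∀ t ≥ (1:ℝ), 0 < 1 - (1 - lam₂) ^ t := by
    intro t ht
    have := Real.rpow_lt_one hb₂.le (by linarith) (by linarith : (0:ℝ) < t)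
    linarith
  have hp : ∀ t ≥ (1:ℝ), 0 < 1 - (1 - lam₁) ^ t := by
    intro t ht
    have := Real.rpow_lt_one hb₁.le (by linarith) (by linarith : (0:ℝ) < t)
    linarith
  have hαpos : ∀ t ≥ (1:ℝ), 0 < α t := by
    intro t ht
    rw [hα t]
    exact div_pos (hp t ht) (Real.sqrt_pos.mpr (hq t ht))
  have hαdiff : ∀ t ≥ (1:ℝ), DifferentiableAt ℝ α t := by
    intro t ht
    have hαfun : α = fun t => (1 - (1 - lam₁) ^ t) / Real.sqrt (1 - (1 - lam₂) ^ t) :=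
      funext hα
    rw [hαfun]
    have hnum : HasDerivAt (fun s : ℝ => 1 - (1 - lam₁) ^ s)
        (0 - (1 - lam₁) ^ t * Real.log (1 - lam₁)) t :=
      (hasDerivAt_const t 1).sub (Real.hasStrictDerivAt_const_rpow hb₁ t).hasDerivAt
    have hinner : HasDerivAt (fun s : ℝ => 1 - (1 - lam₂) ^ s)
        (0 - (1 - lam₂) ^ t * Real.log (1 - lam₂)) t :=
      (hasDerivAt_const t 1).sub (Real.hasStrictDerivAt_const_rpow hb₂ t).hasDerivAt
    have hden := hinner.sqrt (ne_of_gt (hq t ht))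
    exact (hnum.div hden (ne_of_gt (Real.sqrt_pos.mpr (hq t ht)))).differentiableAt
  -- the key derivative computation
  set E : ℝ → ℝ := fun t =>
    α t * f (x t) + ∑ i : Fin d, μ t i ^ 2 / (2 * lam₁ * Real.sqrt (v t i)) with hE
  have hEderiv : ∀ t ≥ T, HasDerivAt E
      (deriv α t * f (x t)
        + α t * ∑ i : Fin d, gradient f (x t) i * (-(1 / α t) * (μ t i / Real.sqrt (v t i)))
        + ∑ i : Fin d,
            ((2 * μ t i * (-lam₁ * μ t i + lam₁ * gradient f (x t) i))
                * (2 * lam₁ * Real.sqrt (v t i))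
              - μ t i ^ 2 * (2 * lam₁ * ((-lam₂ * v t i
                  + lam₂ * (gradient f (x t) i) ^ 2) / (2 * Real.sqrt (v t i)))))
              / (2 * lam₁ * Real.sqrt (v t i)) ^ 2) t := by
    intro t ht
    have ht1 : (1:ℝ) ≤ t := le_trans hT ht
    -- derivative of x as a curve
    set X : EuclideanSpace ℝ (Fin d) :=
      (EuclideanSpace.equiv (Fin d) ℝ).symm
        (fun i => -(1 / α t) * (μ t i / Real.sqrt (v t i))) with hX
    have hXi : ∀ i, X i = -(1 / α t) * (μ t i / Real.sqrt (v t i)) := by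
      intro i; simp [hX]
    have hxat : HasDerivAt x X t := by
      have h1 : HasDerivAt (fun s => (EuclideanSpace.equiv (Fin d) ℝ) (x s))
          ((EuclideanSpace.equiv (Fin d) ℝ) X) t := by
        rw [hasDerivAt_pi]
        intro i
        have := hx t ht1 i
        simpa [hXi i] using this
      have h2 := ((EuclideanSpace.equiv (Fin d) ℝ).symm :
          (Fin d → ℝ) →L[ℝ] EuclideanSpace ℝ (Fin d)).hasFDerivAt.comp_hasDerivAt t h1
      have h3 := h2
      simp only [ContinuousLinearEquiv.coe_coe, Function.comp_def,
        ContinuousLinearEquiv.symm_apply_apply] at h3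
      exact h3
    -- derivative of f ∘ x
    have hfd : HasFDerivAt f (fderiv ℝ f (x t)) (x t) :=
      ((hf.differentiable one_ne_zero) (x t)).hasFDerivAt
    have hfx : HasDerivAt (fun s => f (x s)) (fderiv ℝ f (x t) X) t :=
      hfd.comp_hasDerivAt t hxat
    have hinner : fderiv ℝ f (x t) X
        = ∑ i, gradient f (x t) i * X i := by
      have h : inner ℝ (gradient f (x t)) X = (fderiv ℝ f (x t)) X :=
        InnerProductSpace.toDual_symm_apply
      rw [← h]
      simp only [PiLp.inner_apply, RCLike.inner_apply, conj_trivial, mul_comm]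
    rw [hinner] at hfx
    have hfx' : HasDerivAt (fun s => f (x s))
        (∑ i, gradient f (x t) i * (-(1 / α t) * (μ t i / Real.sqrt (v t i)))) t := by
      convert hfx using 2 with i
      rw [hXi]
    -- derivative of α · f(x)
    have hαat : HasDerivAt α (deriv α t) t := (hαdiff t ht1).hasDerivAt
    have hprod := hαat.mul hfx'
    -- derivative of the sum
    have hsum : HasDerivAt
        (fun s => ∑ i : Fin d, μ s i ^ 2 / (2 * lam₁ * Real.sqrt (v s i)))
        (∑ i : Fin d,
          ((2 * μ t i * (-lam₁ * μ t i + lam₁ * gradient f (x t) i))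
              * (2 * lam₁ * Real.sqrt (v t i))
            - μ t i ^ 2 * (2 * lam₁ * ((-lam₂ * v t i
                + lam₂ * (gradient f (x t) i) ^ 2) / (2 * Real.sqrt (v t i)))))
            / (2 * lam₁ * Real.sqrt (v t i)) ^ 2) t := by
      apply HasDerivAt.fun_sum
      intro i _
      have hsq : HasDerivAt (fun s => μ s i ^ 2)
          (2 * μ t i * (-lam₁ * μ t i + lam₁ * gradient f (x t) i)) t := by
        simpa using (hμ t ht1 i).fun_pow 2
      have hsqrt := (hv t ht1 i).sqrt (ne_of_gt (hvpos t ht1 i))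
      have hden := HasDerivAt.const_mul (2 * lam₁) hsqrt
      have hne : 2 * lam₁ * Real.sqrt (v t i) ≠ 0 := by
        have := Real.sqrt_pos.mpr (hvpos t ht1 i)
        positivity
      exact hsq.div hden hne
    exact hprod.add hsum
  -- conclude via the antitone criterion
  apply antitoneOn_of_deriv_nonpos (convex_Ici T)
  · exact fun t ht => ((hEderiv t ht).continuousAt).continuousWithinAt
  · intro t ht
    rw [interior_Ici] at ht
    exact ((hEderiv t (le_of_lt ht)).differentiableAt).differentiableWithinAt
  · intro t ht
    rw [interior_Ici] at ht
    have ht' : T ≤ t := le_of_lt ht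
    have ht1 : (1:ℝ) ≤ t := le_trans hT ht'
    rw [(hEderiv t ht').deriv]
    have hαt : 0 < α t := hαpos t ht1
    have hfirst : deriv α t * f (x t) ≤ 0 :=
      mul_nonpos_iff.mpr (Or.inr ⟨(hαdec t ht').le, hf0 _⟩)
    have hrest : α t * ∑ i : Fin d,
          gradient f (x t) i * (-(1 / α t) * (μ t i / Real.sqrt (v t i)))
        + ∑ i : Fin d,
            ((2 * μ t i * (-lam₁ * μ t i + lam₁ * gradient f (x t) i))
                * (2 * lam₁ * Real.sqrt (v t i))
              - μ t i ^ 2 * (2 * lam₁ * ((-lam₂ * v t i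
                  + lam₂ * (gradient f (x t) i) ^ 2) / (2 * Real.sqrt (v t i)))))
              / (2 * lam₁ * Real.sqrt (v t i)) ^ 2 ≤ 0 := by
      rw [Finset.mul_sum, ← Finset.sum_add_distrib]
      apply Finset.sum_nonpos
      intro i _
      set g := gradient f (x t) i
      set m := μ t i
      set s := Real.sqrt (v t i) with hs
      have hspos : 0 < s := Real.sqrt_pos.mpr (hvpos t ht1 i)
      have hV : s ^ 2 = v t i := Real.sq_sqrt (hvpos t ht1 i).le
      rw [← hV]
      have hcoef : 0 ≤ 1 - lam₂ / (4 * lam₁) := by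
        rw [sub_nonneg, div_le_one (by positivity)]
        linarith
      have key : α t * (g * (-(1 / α t) * (m / s)))
          + (2 * m * (-lam₁ * m + lam₁ * g) * (2 * lam₁ * s)
            - m ^ 2 * (2 * lam₁ * ((-lam₂ * s ^ 2 + lam₂ * g ^ 2) / (2 * s))))
            / (2 * lam₁ * s) ^ 2
          = -((1 - lam₂ / (4 * lam₁)) * m ^ 2 / s + lam₂ * (m * g) ^ 2 / (4 * lam₁ * s ^ 3)) := by
        field_simp
        ring
      rw [key]
      have h1 : 0 ≤ (1 - lam₂ / (4 * lam₁)) * m ^ 2 / s :=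
        div_nonneg (mul_nonneg hcoef (sq_nonneg m)) hspos.le
      have h2 : 0 ≤ lam₂ * (m * g) ^ 2 / (4 * lam₁ * s ^ 3) := by positivity
      linarith
    linarith
end

section
/- Let 0 < λ₂ < λ₁ < 1, let f : ℝ^d → ℝ be continuously differentiable and bounded below by 0, set α(t) = (1-(1-λ₁)^t)/√(1-(1-λ₂)^t), and let (μ, v, x) : [1,∞) → ℝ^d × ℝ^d × ℝ^d solve μ̇ᵢ = -λ₁ μᵢ + λ₁ ∇ᵢf(x), v̇ᵢ = -λ₂ vᵢ + λ₂ (∇ᵢf(x))², ẋᵢ = -(1/α(t)) μᵢ/√(vᵢ) with μ(1) = 0 and vᵢ(1) > 0 for all i. Then for every coordinate i, the integrals ∫₁^∞ μᵢ(s)² vᵢ(s)^{-1/2} ds and ∫₁^∞ μᵢ(s)² vᵢ(s)^{-3/2} (∇ᵢf(x(s)))² ds are finite. -/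
open Real Filter MeasureTheory

lemma aux_rpow_mhalf {w : ℝ} (hw : 0 < w) : w ^ (-(1:ℝ)/2) = (Real.sqrt w)⁻¹ := by
  rw [Real.sqrt_eq_rpow, ← Real.rpow_neg hw.le]
  norm_num

lemma aux_rpow_m3half {w : ℝ} (hw : 0 < w) : w ^ (-(3:ℝ)/2) = (Real.sqrt w)⁻¹ * w⁻¹ := by
  have : (-(3:ℝ)/2) = (-(1:ℝ)/2) + (-1 : ℝ) := by norm_num
  rw [this, Real.rpow_add hw, aux_rpow_mhalf hw, Real.rpow_neg_one]

lemma aux_v_pos (lam₂ : ℝ) (hlam₂ : 0 < lam₂) (w g : ℝ → ℝ)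
    (hw : ∀ t ≥ (1:ℝ), HasDerivAt w (-lam₂ * w t + lam₂ * (g t)^2) t)
    (hw1 : 0 < w 1) : ∀ t ≥ (1:ℝ), 0 < w t := by
  intro t ht
  set φ : ℝ → ℝ := fun s => Real.exp (lam₂ * s) * w s with hφ
  have hφd : ∀ s ≥ (1:ℝ), HasDerivAt φ (Real.exp (lam₂ * s) * (lam₂ * (g s)^2)) s := by
    intro s hs
    have h1 : HasDerivAt (fun u => Real.exp (lam₂ * u)) (Real.exp (lam₂ * s) * lam₂) s := by
      simpa [mul_comm, Function.comp_def] using (Real.hasDerivAt_exp (lam₂ * s)).comp s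
        ((hasDerivAt_id s).const_mul lam₂)
    have : HasDerivAt φ (Real.exp (lam₂ * s) * lam₂ * w s
        + Real.exp (lam₂ * s) * (-lam₂ * w s + lam₂ * (g s)^2)) s := h1.mul (hw s hs)
    convert this using 1
    ring
  have hmono : MonotoneOn φ (Set.Ici 1) := by
    apply monotoneOn_of_deriv_nonneg (convex_Ici 1)
    · exact fun s hs => ((hφd s hs).continuousAt).continuousWithinAt
    · intro s hs
      rw [interior_Ici] at hs
      exact ((hφd s (le_of_lt hs)).differentiableAt).differentiableWithinAt
    · intro s hs
      rw [interior_Ici] at hs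
      rw [(hφd s (le_of_lt hs)).deriv]
      positivity
  have h1 : φ 1 ≤ φ t := hmono (by simp) (by simpa using ht) ht
  have hp1 : 0 < φ 1 := by positivity
  have : 0 < φ t := lt_of_lt_of_le hp1 h1
  simp only [hφ] at this
  have he : 0 < Real.exp (lam₂ * t) := Real.exp_pos _
  nlinarith [this, he]

set_option maxHeartbeats 1000000 in
/-- Dissipation integrability for continuous-time Adam: for every coordinate
`i`, the integrals `∫₁^∞ μᵢ² vᵢ^{-1/2}` and `∫₁^∞ μᵢ² vᵢ^{-3/2} (∇ᵢf(x))²`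
are finite. -/
theorem adam_dissipation_integrable
    (d : ℕ) (lam₁ lam₂ : ℝ)
    (hlam₂ : 0 < lam₂) (hlam₁₂ : lam₂ < lam₁) (hlam₁ : lam₁ < 1)
    (f : EuclideanSpace ℝ (Fin d) → ℝ)
    (hf : ContDiff ℝ 1 f) (hf0 : ∀ y, 0 ≤ f y)
    (α : ℝ → ℝ)
    (hα : ∀ t : ℝ, α t = (1 - (1 - lam₁) ^ t) / Real.sqrt (1 - (1 - lam₂) ^ t))
    (μ v x : ℝ → EuclideanSpace ℝ (Fin d))
    (hμ : ∀ t ≥ (1 : ℝ), ∀ i : Fin d, HasDerivAt (fun s => μ s i)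
      (-lam₁ * μ t i + lam₁ * gradient f (x t) i) t)
    (hv : ∀ t ≥ (1 : ℝ), ∀ i : Fin d, HasDerivAt (fun s => v s i)
      (-lam₂ * v t i + lam₂ * (gradient f (x t) i) ^ 2) t)
    (hx : ∀ t ≥ (1 : ℝ), ∀ i : Fin d, HasDerivAt (fun s => x s i)
      (-(1 / α t) * (μ t i / Real.sqrt (v t i))) t)
    (hμ1 : μ 1 = 0) (hv1 : ∀ i : Fin d, 0 < v 1 i) :
    ∀ i : Fin d,
      IntegrableOn (fun s => μ s i ^ 2 * v s i ^ (-(1 : ℝ) / 2)) (Set.Ici 1) ∧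
      IntegrableOn (fun s => μ s i ^ 2 * v s i ^ (-(3 : ℝ) / 2) * (gradient f (x s) i) ^ 2)
        (Set.Ici 1) := by
  have hlam₁0 : 0 < lam₁ := hlam₂.trans hlam₁₂
  set a : ℝ := 1 - lam₁ with ha_def
  set b : ℝ := 1 - lam₂ with hb_def
  have ha0 : 0 < a := by simp [ha_def]; linarith
  have ha1 : a < 1 := by simp [ha_def]; linarith
  have hb0 : 0 < b := by simp [hb_def]; linarith
  have hb1 : b < 1 := by simp [hb_def]; linarith
  -- N and D
  set N : ℝ → ℝ := fun t => 1 - a ^ t with hN_def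
  set D : ℝ → ℝ := fun t => Real.sqrt (1 - b ^ t) with hD_def
  have hat : ∀ t ≥ (1:ℝ), a ^ t ≤ a := by
    intro t ht
    simpa using Real.rpow_le_rpow_of_exponent_ge ha0 ha1.le ht
  have hbt : ∀ t ≥ (1:ℝ), b ^ t ≤ b := by
    intro t ht
    simpa using Real.rpow_le_rpow_of_exponent_ge hb0 hb1.le ht
  have hN_lb : ∀ t ≥ (1:ℝ), lam₁ ≤ N t := by
    intro t ht; have := hat t ht; simp only [hN_def, ha_def] at *; linarith
  have hN_pos : ∀ t ≥ (1:ℝ), 0 < N t := fun t ht => lt_of_lt_of_le hlam₁0 (hN_lb t ht)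
  have hN_ub : ∀ t : ℝ, N t ≤ 1 := by
    intro t; have : (0:ℝ) < a ^ t := Real.rpow_pos_of_pos ha0 t
    simp only [hN_def]; linarith
  have hDsq_lb : ∀ t ≥ (1:ℝ), lam₂ ≤ 1 - b ^ t := by
    intro t ht; have := hbt t ht; simp only [hb_def] at *; linarith
  have hDsq_pos : ∀ t ≥ (1:ℝ), 0 < 1 - b ^ t :=
    fun t ht => lt_of_lt_of_le hlam₂ (hDsq_lb t ht)
  have hD_pos : ∀ t ≥ (1:ℝ), 0 < D t := fun t ht => Real.sqrt_pos.2 (hDsq_pos t ht)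
  have hD_ub : ∀ t : ℝ, D t ≤ 1 := by
    intro t
    have : (0:ℝ) < b ^ t := Real.rpow_pos_of_pos hb0 t
    have h1 : (1 : ℝ) - b ^ t ≤ 1 := by linarith
    calc D t ≤ Real.sqrt 1 := Real.sqrt_le_sqrt h1
    _ = 1 := Real.sqrt_one
  have hαeq : ∀ t, α t = N t / D t := fun t => hα t
  have hα_pos : ∀ t ≥ (1:ℝ), 0 < α t := by
    intro t ht; rw [hαeq]; exact div_pos (hN_pos t ht) (hD_pos t ht)
  -- derivatives of N, D, α
  set N' : ℝ → ℝ := fun t => -(a ^ t * Real.log a) with hN'_def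
  have hNd : ∀ t : ℝ, HasDerivAt N (N' t) t := by
    intro t
    simpa [hN_def, hN'_def] using
      ((Real.hasStrictDerivAt_const_rpow ha0 t).hasDerivAt).const_sub 1
  have hloga : Real.log a < 0 := Real.log_neg ha0 ha1
  have hlogb : Real.log b < 0 := Real.log_neg hb0 hb1
  have hN'_nonneg : ∀ t : ℝ, 0 ≤ N' t := by
    intro t
    have : (0:ℝ) < a ^ t := Real.rpow_pos_of_pos ha0 t
    simp only [hN'_def]
    nlinarith
  set D' : ℝ → ℝ := fun t => -(b ^ t * Real.log b) / (2 * D t) with hD'_def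
  have hDd : ∀ t ≥ (1:ℝ), HasDerivAt D (D' t) t := by
    intro t ht
    have h1 : HasDerivAt (fun s => 1 - b ^ s) (-(b ^ t * Real.log b)) t := by
      simpa using ((Real.hasStrictDerivAt_const_rpow hb0 t).hasDerivAt).const_sub 1
    simpa [hD_def, hD'_def] using h1.sqrt (ne_of_gt (hDsq_pos t ht))
  have hD'_nonneg : ∀ t ≥ (1:ℝ), 0 ≤ D' t := by
    intro t ht
    have h1 : (0:ℝ) < b ^ t := Real.rpow_pos_of_pos hb0 t
    have h2 := hD_pos t ht
    simp only [hD'_def]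
    apply div_nonneg _ (by linarith)
    nlinarith
  set α' : ℝ → ℝ := fun t => (N' t * D t - N t * D' t) / (D t) ^ 2 with hα'_def
  have hαd : ∀ t ≥ (1:ℝ), HasDerivAt α (α' t) t := by
    intro t ht
    have : HasDerivAt (fun s => N s / D s) (α' t) t :=
      (hNd t).div (hDd t ht) (ne_of_gt (hD_pos t ht))
    exact this.congr_of_eventuallyEq (Eventually.of_forall fun s => (hαeq s))
  set ρ : ℝ → ℝ := fun t => N' t / N t with hρ_def
  have hρ_nonneg : ∀ t ≥ (1:ℝ), 0 ≤ ρ t := by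
    intro t ht
    exact div_nonneg (hN'_nonneg t) (hN_pos t ht).le
  have hαρ : ∀ t ≥ (1:ℝ), α' t ≤ ρ t * α t := by
    intro t ht
    have hD := hD_pos t ht
    have hN := hN_pos t ht
    have hD' := hD'_nonneg t ht
    rw [hαeq, hα'_def, hρ_def]
    rw [div_le_iff₀ (by positivity)]
    have hR : N' t / N t * (N t / D t) * (D t) ^ 2 = N' t * D t := by
      field_simp
    rw [hR]
    nlinarith [mul_nonneg hN.le hD']
  -- v positivity
  have hvpos : ∀ t ≥ (1:ℝ), ∀ i : Fin d, 0 < v t i := by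
    intro t ht i
    exact aux_v_pos lam₂ hlam₂ (fun s => v s i) (fun s => gradient f (x s) i)
      (fun s hs => hv s hs i) (hv1 i) t ht
  have hsv_pos : ∀ t ≥ (1:ℝ), ∀ i : Fin d, 0 < Real.sqrt (v t i) :=
    fun t ht i => Real.sqrt_pos.2 (hvpos t ht i)
  -- vector derivative of x and chain rule
  have hfdiff : Differentiable ℝ f := hf.differentiable one_ne_zero
  have hxd : ∀ t ≥ (1:ℝ), HasDerivAt x
      ((EuclideanSpace.equiv (Fin d) ℝ).symm
        (fun i => -(1 / α t) * (μ t i / Real.sqrt (v t i)))) t := by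
    intro t ht
    have h1 : HasDerivAt (fun s => (EuclideanSpace.equiv (Fin d) ℝ) (x s))
        (fun i => -(1 / α t) * (μ t i / Real.sqrt (v t i))) t :=
      hasDerivAt_pi.2 (fun i => hx t ht i)
    have := ((EuclideanSpace.equiv (Fin d) ℝ).symm :
      (Fin d → ℝ) →L[ℝ] EuclideanSpace ℝ (Fin d)).hasFDerivAt.comp_hasDerivAt t h1
    simpa [Function.comp_def] using this
  have hfxd : ∀ t ≥ (1:ℝ), HasDerivAt (fun s => f (x s))
      (∑ i, gradient f (x t) i * (-(1 / α t) * (μ t i / Real.sqrt (v t i)))) t := by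
    intro t ht
    have h3 : HasDerivAt (fun s => f (x s))
        (fderiv ℝ f (x t) ((EuclideanSpace.equiv (Fin d) ℝ).symm
          (fun i => -(1 / α t) * (μ t i / Real.sqrt (v t i))))) t :=
      (hfdiff (x t)).hasFDerivAt.comp_hasDerivAt t (hxd t ht)
    have h4 : fderiv ℝ f (x t) ((EuclideanSpace.equiv (Fin d) ℝ).symm
          (fun i => -(1 / α t) * (μ t i / Real.sqrt (v t i))))
        = ∑ i, gradient f (x t) i * (-(1 / α t) * (μ t i / Real.sqrt (v t i))) := by
      have h5 : fderiv ℝ f (x t) ((EuclideanSpace.equiv (Fin d) ℝ).symm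
          (fun i => -(1 / α t) * (μ t i / Real.sqrt (v t i))))
          = inner ℝ (gradient f (x t)) ((EuclideanSpace.equiv (Fin d) ℝ).symm
          (fun i => -(1 / α t) * (μ t i / Real.sqrt (v t i)))) := by
        rw [gradient, InnerProductSpace.toDual_symm_apply]
      rw [h5, PiLp.inner_apply]
      simp [mul_comm]
    rwa [h4] at h3
  -- energy
  set S : ℝ → ℝ := fun t => ∑ i, (μ t i) ^ 2 * (Real.sqrt (v t i))⁻¹ with hS_def
  set Q : ℝ → ℝ := fun t =>
    ∑ i, (μ t i) ^ 2 * (Real.sqrt (v t i))⁻¹ * (v t i)⁻¹ * (gradient f (x t) i) ^ 2 with hQ_def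
  set c₁ : ℝ := 1 - lam₂ / (4 * lam₁) with hc₁_def
  set c₂ : ℝ := lam₂ / (4 * lam₁) with hc₂_def
  have hc₁_pos : 0 < c₁ := by
    have : lam₂ / (4 * lam₁) < 1 := by
      rw [div_lt_one (by linarith)]
      linarith
    simp only [hc₁_def]; linarith
  have hc₂_pos : 0 < c₂ := by
    simp only [hc₂_def]; positivity
  set E : ℝ → ℝ := fun t => α t * f (x t) + (1 / (2 * lam₁)) * S t with hE_def
  set E' : ℝ → ℝ := fun t => α' t * f (x t) - (c₁ * S t + c₂ * Q t) with hE'_def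
  -- derivative of each summand of S
  have hPd : ∀ t ≥ (1:ℝ), ∀ i : Fin d,
      HasDerivAt (fun s => (μ s i) ^ 2 * (Real.sqrt (v s i))⁻¹)
        ((2 * μ t i * (-lam₁ * μ t i + lam₁ * gradient f (x t) i)) * (Real.sqrt (v t i))⁻¹
          + (μ t i) ^ 2 *
            (-((-lam₂ * v t i + lam₂ * (gradient f (x t) i) ^ 2) / (2 * Real.sqrt (v t i)))
              / (Real.sqrt (v t i)) ^ 2)) t := by
    intro t ht i
    have h1 : HasDerivAt (fun s => (μ s i) ^ 2)
        (2 * μ t i * (-lam₁ * μ t i + lam₁ * gradient f (x t) i)) t := by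
      have := (hμ t ht i).fun_pow 2
      simpa [mul_comm, mul_assoc, mul_left_comm] using this
    have h2 : HasDerivAt (fun s => (Real.sqrt (v s i))⁻¹)
        (-((-lam₂ * v t i + lam₂ * (gradient f (x t) i) ^ 2) / (2 * Real.sqrt (v t i)))
          / (Real.sqrt (v t i)) ^ 2) t := by
      exact ((hv t ht i).sqrt (ne_of_gt (hvpos t ht i))).inv (ne_of_gt (hsv_pos t ht i))
    exact h1.mul h2
  have hSd : ∀ t ≥ (1:ℝ), HasDerivAt S
      (∑ i, ((2 * μ t i * (-lam₁ * μ t i + lam₁ * gradient f (x t) i)) * (Real.sqrt (v t i))⁻¹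
          + (μ t i) ^ 2 *
            (-((-lam₂ * v t i + lam₂ * (gradient f (x t) i) ^ 2) / (2 * Real.sqrt (v t i)))
              / (Real.sqrt (v t i)) ^ 2))) t := by
    intro t ht
    exact HasDerivAt.fun_sum (fun i _ => hPd t ht i)
  have hEd : ∀ t ≥ (1:ℝ), HasDerivAt E (E' t) t := by
    intro t ht
    have h1 : HasDerivAt (fun s => α s * f (x s) + 1 / (2 * lam₁) * S s) _ t :=
      ((hαd t ht).fun_mul (hfxd t ht)).fun_add ((hSd t ht).const_mul (1 / (2 * lam₁)))
    convert h1 using 1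
    simp only [hE'_def]
    have hsum : c₁ * S t + c₂ * Q t =
        ∑ i, (c₁ * ((μ t i) ^ 2 * (Real.sqrt (v t i))⁻¹)
          + c₂ * ((μ t i) ^ 2 * (Real.sqrt (v t i))⁻¹ * (v t i)⁻¹ * (gradient f (x t) i) ^ 2)) := by
      rw [Finset.sum_add_distrib, ← Finset.mul_sum, ← Finset.mul_sum, hS_def, hQ_def]
    rw [hsum, Finset.mul_sum, Finset.mul_sum, add_assoc, ← Finset.sum_add_distrib, sub_eq_add_neg,
      ← Finset.sum_neg_distrib]
    congr 1
    apply Finset.sum_congr rfl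
    intro i _
    have hαt : α t ≠ 0 := ne_of_gt (hα_pos t ht)
    have hrt : Real.sqrt (v t i) ≠ 0 := ne_of_gt (hsv_pos t ht i)
    have hvt : v t i ≠ 0 := ne_of_gt (hvpos t ht i)
    rw [Real.sq_sqrt (hvpos t ht i).le]
    simp only [hc₁_def, hc₂_def]
    field_simp
    ring
  -- continuity facts on [1, ∞)
  have hca : Continuous fun t : ℝ => a ^ t := by
    have h : (fun t : ℝ => a ^ t) = fun t => Real.exp (Real.log a * t) :=
      funext fun t => Real.rpow_def_of_pos ha0 t
    rw [h]; exact Real.continuous_exp.comp (continuous_const.mul continuous_id)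
  have hcb : Continuous fun t : ℝ => b ^ t := by
    have h : (fun t : ℝ => b ^ t) = fun t => Real.exp (Real.log b * t) :=
      funext fun t => Real.rpow_def_of_pos hb0 t
    rw [h]; exact Real.continuous_exp.comp (continuous_const.mul continuous_id)
  have hNc : Continuous N := continuous_const.sub hca
  have hN'c : Continuous N' := (hca.mul continuous_const).neg
  have hDc : Continuous D := Real.continuous_sqrt.comp (continuous_const.sub hcb)
  have hD'c : ContinuousOn D' (Set.Ici 1) := by
    apply ContinuousOn.div ((hcb.mul continuous_const).neg.continuousOn)
      (continuous_const.mul hDc).continuousOn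
    intro t ht
    have := hD_pos t ht
    simp only [Pi.mul_apply, Pi.pow_apply]
    positivity
  have hα'c : ContinuousOn α' (Set.Ici 1) := by
    apply ContinuousOn.div
      (((hN'c.continuousOn).mul hDc.continuousOn).sub ((hNc.continuousOn).mul hD'c))
      ((hDc.pow 2).continuousOn)
    intro t ht
    have := hD_pos t ht
    simp only [Pi.mul_apply, Pi.pow_apply]
    positivity
  have hρc : ContinuousOn ρ (Set.Ici 1) := by
    apply ContinuousOn.div hN'c.continuousOn hNc.continuousOn
    intro t ht
    exact ne_of_gt (hN_pos t ht)
  have hμc : ∀ i : Fin d, ContinuousOn (fun s => μ s i) (Set.Ici 1) :=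
    fun i t ht => (hμ t ht i).continuousAt.continuousWithinAt
  have hvc : ∀ i : Fin d, ContinuousOn (fun s => v s i) (Set.Ici 1) :=
    fun i t ht => (hv t ht i).continuousAt.continuousWithinAt
  have hxc : ContinuousOn x (Set.Ici 1) :=
    fun t ht => (hxd t ht).continuousAt.continuousWithinAt
  have hfxc : ContinuousOn (fun s => f (x s)) (Set.Ici 1) :=
    hf.continuous.comp_continuousOn hxc
  have hgradc : Continuous fun y => gradient f y := by
    have h1 : Continuous (fderiv ℝ f) := hf.continuous_fderiv one_ne_zero
    simp only [gradient]
    exact (LinearIsometryEquiv.continuous _).comp h1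
  have hgc : ∀ i : Fin d, ContinuousOn (fun s => gradient f (x s) i) (Set.Ici 1) := by
    intro i
    have h2 : Continuous fun y : EuclideanSpace ℝ (Fin d) => gradient f y i :=
      (continuous_apply i).comp ((EuclideanSpace.equiv (Fin d) ℝ).continuous.comp hgradc)
    exact h2.comp_continuousOn hxc
  have hsvinvc : ∀ i : Fin d, ContinuousOn (fun s => (Real.sqrt (v s i))⁻¹) (Set.Ici 1) := by
    intro i
    apply ContinuousOn.inv₀ (Real.continuous_sqrt.comp_continuousOn (hvc i))
    intro t ht
    exact ne_of_gt (hsv_pos t ht i)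
  have hSc : ContinuousOn S (Set.Ici 1) := by
    apply continuousOn_finset_sum
    intro i _
    exact ((hμc i).pow 2).mul (hsvinvc i)
  have hQc : ContinuousOn Q (Set.Ici 1) := by
    apply continuousOn_finset_sum
    intro i _
    refine ((((hμc i).pow 2).mul (hsvinvc i)).mul (ContinuousOn.inv₀ (hvc i) ?_)).mul
      ((hgc i).pow 2)
    intro t ht
    exact ne_of_gt (hvpos t ht i)
  have hαc : ContinuousOn α (Set.Ici 1) :=
    fun t ht => (hαd t ht).continuousAt.continuousWithinAt
  have hEc : ContinuousOn E (Set.Ici 1) :=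
    fun t ht => (hEd t ht).continuousAt.continuousWithinAt
  have hE'c : ContinuousOn E' (Set.Ici 1) := by
    simp only [hE'_def]
    exact ((hα'c.mul hfxc).sub ((continuousOn_const.mul hSc).add (continuousOn_const.mul hQc)))
  -- nonnegativity
  have hS_nonneg : ∀ t ≥ (1:ℝ), 0 ≤ S t := by
    intro t ht
    apply Finset.sum_nonneg
    intro i _
    have := hsv_pos t ht i
    positivity
  have hQ_nonneg : ∀ t ≥ (1:ℝ), 0 ≤ Q t := by
    intro t ht
    apply Finset.sum_nonneg
    intro i _
    have h1 := hsv_pos t ht i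
    have h2 := hvpos t ht i
    positivity
  have hE_nonneg : ∀ t ≥ (1:ℝ), 0 ≤ E t := by
    intro t ht
    have h1 := hα_pos t ht
    have h2 := hf0 (x t)
    have h3 := hS_nonneg t ht
    simp only [hE_def]
    have : 0 ≤ α t * f (x t) := mul_nonneg h1.le h2
    have : 0 ≤ 1 / (2 * lam₁) * S t := by positivity
    linarith
  have hαfE : ∀ t ≥ (1:ℝ), α t * f (x t) ≤ E t := by
    intro t ht
    have h3 := hS_nonneg t ht
    simp only [hE_def]
    have : 0 ≤ 1 / (2 * lam₁) * S t := by positivity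
    linarith
  have hE'le : ∀ t ≥ (1:ℝ), E' t ≤ ρ t * E t := by
    intro t ht
    have h1 : E' t ≤ α' t * f (x t) := by
      have h2 := hS_nonneg t ht
      have h3 := hQ_nonneg t ht
      simp only [hE'_def]
      nlinarith [hc₁_pos, hc₂_pos]
    have h4 : α' t * f (x t) ≤ ρ t * α t * f (x t) :=
      mul_le_mul_of_nonneg_right (hαρ t ht) (hf0 (x t))
    have h5 : ρ t * α t * f (x t) ≤ ρ t * E t := by
      rw [mul_assoc]
      exact mul_le_mul_of_nonneg_left (hαfE t ht) (hρ_nonneg t ht)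
    linarith
  -- energy bound via H = E / N
  have hN1 : N 1 = lam₁ := by
    simp only [hN_def, Real.rpow_one, ha_def]
    ring
  set H : ℝ → ℝ := fun t => E t / N t with hH_def
  have hHd : ∀ t ≥ (1:ℝ), HasDerivAt H ((E' t * N t - E t * N' t) / (N t) ^ 2) t :=
    fun t ht => (hEd t ht).div (hNd t) (ne_of_gt (hN_pos t ht))
  have hH_anti : AntitoneOn H (Set.Ici 1) := by
    apply antitoneOn_of_deriv_nonpos (convex_Ici 1)
    · exact fun t ht => (hHd t ht).continuousAt.continuousWithinAt
    · intro t ht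
      rw [interior_Ici] at ht
      exact (hHd t ht.le).differentiableAt.differentiableWithinAt
    · intro t ht
      rw [interior_Ici] at ht
      rw [(hHd t ht.le).deriv]
      have hNp := hN_pos t ht.le
      apply div_nonpos_of_nonpos_of_nonneg _ (by positivity)
      have h1 : E' t * N t ≤ (ρ t * E t) * N t :=
        mul_le_mul_of_nonneg_right (hE'le t ht.le) hNp.le
      have h2 : (ρ t * E t) * N t = E t * N' t := by
        simp only [hρ_def]
        field_simp
      linarith
  have hE1_nonneg : 0 ≤ E 1 := hE_nonneg 1 le_rfl
  have hEB : ∀ t ≥ (1:ℝ), E t ≤ E 1 / lam₁ := by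
    intro t ht
    have h1 : H t ≤ H 1 := hH_anti (Set.mem_Ici.2 le_rfl) (Set.mem_Ici.2 ht) ht
    simp only [hH_def, hN1] at h1
    have hNp := hN_pos t ht
    have h2 : E t ≤ E 1 / lam₁ * N t := by
      rw [div_le_iff₀ hNp] at h1
      linarith
    have h3 : E 1 / lam₁ * N t ≤ E 1 / lam₁ := by
      have h0 : 0 ≤ E 1 / lam₁ := by positivity
      have := mul_le_mul_of_nonneg_left (hN_ub t) h0
      simpa using this
    linarith
  -- the key integral bound
  set B : ℝ := E 1 / lam₁ * (-Real.log lam₁) + E 1 with hB_def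
  have hlog1 : Real.log lam₁ ≤ 0 := Real.log_nonpos hlam₁0.le hlam₁.le
  have hSQc : ContinuousOn (fun s => c₁ * S s + c₂ * Q s) (Set.Ici 1) :=
    (continuousOn_const.mul hSc).add (continuousOn_const.mul hQc)
  have hkey : ∀ T ≥ (1:ℝ), (∫ s in (1:ℝ)..T, (c₁ * S s + c₂ * Q s)) ≤ B := by
    intro T hT
    have huIcc : Set.uIcc (1:ℝ) T = Set.Icc 1 T := Set.uIcc_of_le hT
    have hsub : Set.Icc (1:ℝ) T ⊆ Set.Ici 1 := fun s hs => hs.1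
    -- interval integrability
    have hiSQ : IntervalIntegrable (fun s => c₁ * S s + c₂ * Q s) volume 1 T :=
      (hSQc.mono (by rw [huIcc]; exact hsub)).intervalIntegrable
    have hiE' : IntervalIntegrable E' volume 1 T :=
      (hE'c.mono (by rw [huIcc]; exact hsub)).intervalIntegrable
    have hiαf : IntervalIntegrable (fun s => α' s * f (x s)) volume 1 T :=
      ((hα'c.mul hfxc).mono (by rw [huIcc]; exact hsub)).intervalIntegrable
    have hiρ : IntervalIntegrable ρ volume 1 T :=
      (hρc.mono (by rw [huIcc]; exact hsub)).intervalIntegrable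
    have hiρc : IntervalIntegrable (fun s => ρ s * (E 1 / lam₁)) volume 1 T :=
      hiρ.mul_const _
    -- FTC for E
    have hftcE : (∫ s in (1:ℝ)..T, E' s) = E T - E 1 := by
      apply intervalIntegral.integral_eq_sub_of_hasDerivAt
      · intro s hs
        rw [huIcc] at hs
        exact hEd s hs.1
      · exact hiE'
    -- FTC for log N
    have hftcρ : (∫ s in (1:ℝ)..T, ρ s) = Real.log (N T) - Real.log (N 1) := by
      apply intervalIntegral.integral_eq_sub_of_hasDerivAt
      · intro s hs
        rw [huIcc] at hs
        have := (hNd s).log (ne_of_gt (hN_pos s hs.1))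
        simpa [hρ_def] using this
      · exact hiρ
    -- pointwise identity : c₁ S + c₂ Q = α' f - E'
    have hid : (∫ s in (1:ℝ)..T, (c₁ * S s + c₂ * Q s))
        = (∫ s in (1:ℝ)..T, α' s * f (x s)) - (E T - E 1) := by
      rw [← hftcE, ← intervalIntegral.integral_sub hiαf hiE']
      apply intervalIntegral.integral_congr
      intro s _
      simp only [hE'_def]
      ring
    -- bound on ∫ α' f
    have hαfb : (∫ s in (1:ℝ)..T, α' s * f (x s)) ≤ E 1 / lam₁ * (-Real.log lam₁) := by
      have h1 : (∫ s in (1:ℝ)..T, α' s * f (x s)) ≤ ∫ s in (1:ℝ)..T, ρ s * (E 1 / lam₁) := by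
        apply intervalIntegral.integral_mono_on hT hiαf hiρc
        intro s hs
        have hs1 : (1:ℝ) ≤ s := hs.1
        have h4 : α' s * f (x s) ≤ ρ s * α s * f (x s) :=
          mul_le_mul_of_nonneg_right (hαρ s hs1) (hf0 (x s))
        have h5 : ρ s * α s * f (x s) ≤ ρ s * E s := by
          rw [mul_assoc]
          exact mul_le_mul_of_nonneg_left (hαfE s hs1) (hρ_nonneg s hs1)
        have h6 : ρ s * E s ≤ ρ s * (E 1 / lam₁) :=
          mul_le_mul_of_nonneg_left (hEB s hs1) (hρ_nonneg s hs1)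
        exact le_trans h4 (le_trans h5 h6)
      have h2 : (∫ s in (1:ℝ)..T, ρ s * (E 1 / lam₁))
          = (Real.log (N T) - Real.log (N 1)) * (E 1 / lam₁) := by
        rw [intervalIntegral.integral_mul_const, hftcρ]
      have h3 : Real.log (N T) ≤ 0 := Real.log_nonpos (hN_pos T hT).le (hN_ub T)
      have h7 : 0 ≤ E 1 / lam₁ := by positivity
      have h8 : (Real.log (N T) - Real.log (N 1)) * (E 1 / lam₁)
          ≤ (-Real.log lam₁) * (E 1 / lam₁) := by
        apply mul_le_mul_of_nonneg_right _ h7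
        rw [hN1]
        linarith
      calc (∫ s in (1:ℝ)..T, α' s * f (x s)) ≤ _ := h1
        _ = _ := h2
        _ ≤ (-Real.log lam₁) * (E 1 / lam₁) := h8
        _ = E 1 / lam₁ * (-Real.log lam₁) := by ring
    have hET : 0 ≤ E T := hE_nonneg T hT
    rw [hid, hB_def]
    calc (∫ s in (1:ℝ)..T, α' s * f (x s)) - (E T - E 1)
        = (∫ s in (1:ℝ)..T, α' s * f (x s)) + (E 1 - E T) := by ring
      _ ≤ E 1 / lam₁ * (-Real.log lam₁) + E 1 := add_le_add hαfb (sub_le_self _ hET)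
  -- master integrability criterion
  have master : ∀ F : ℝ → ℝ, ContinuousOn F (Set.Ici 1) → (∀ s ≥ (1:ℝ), 0 ≤ F s) →
      (∀ s ≥ (1:ℝ), F s ≤ c₁ * S s + c₂ * Q s) → IntegrableOn F (Set.Ici 1) := by
    intro F hFc hF0 hFle
    have hInt : ∀ T : ℝ, IntegrableOn F (Set.Ioc 1 T) := by
      intro T
      rcases le_or_gt T 1 with h | h
      · rw [Set.Ioc_eq_empty (by exact not_lt.2 h)]
        exact integrableOn_empty
      · have h1 : Set.Icc (1:ℝ) T ⊆ Set.Ici 1 := fun s hs => hs.1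
        exact ((hFc.mono h1).integrableOn_Icc).mono_set Set.Ioc_subset_Icc_self
    have hIoi : IntegrableOn F (Set.Ioi 1) := by
      apply MeasureTheory.integrableOn_Ioi_of_intervalIntegral_norm_bounded B 1 hInt
        (tendsto_id (α := ℝ) (x := atTop))
      filter_upwards [eventually_ge_atTop (1:ℝ)] with T hT
      have huIcc : Set.uIcc (1:ℝ) T = Set.Icc 1 T := Set.uIcc_of_le hT
      have hsub : Set.Icc (1:ℝ) T ⊆ Set.Ici 1 := fun s hs => hs.1
      have hiF : IntervalIntegrable F volume 1 T :=
        (hFc.mono (by rw [huIcc]; exact hsub)).intervalIntegrable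
      have hiSQ : IntervalIntegrable (fun s => c₁ * S s + c₂ * Q s) volume 1 T :=
        (hSQc.mono (by rw [huIcc]; exact hsub)).intervalIntegrable
      have h1 : (∫ s in (1:ℝ)..T, ‖F s‖) = ∫ s in (1:ℝ)..T, F s := by
        apply intervalIntegral.integral_congr
        intro s hs
        rw [huIcc] at hs
        exact Real.norm_of_nonneg (hF0 s hs.1)
      rw [h1]
      calc (∫ s in (1:ℝ)..T, F s) ≤ ∫ s in (1:ℝ)..T, (c₁ * S s + c₂ * Q s) := by
            apply intervalIntegral.integral_mono_on hT hiF hiSQ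
            intro s hs
            exact hFle s hs.1
        _ ≤ B := hkey T hT
    have : IntegrableOn F (Set.Ici 1) := by
      rwa [integrableOn_Ici_iff_integrableOn_Ioi]
    exact this
  -- conclusion
  intro i
  constructor
  · have h1 : IntegrableOn (fun s => c₁ * ((μ s i) ^ 2 * (Real.sqrt (v s i))⁻¹))
        (Set.Ici 1) := by
      apply master
      · exact continuousOn_const.mul (((hμc i).pow 2).mul (hsvinvc i))
      · intro s hs
        have := hsv_pos s hs i
        positivity
      · intro s hs
        have hterm : (μ s i) ^ 2 * (Real.sqrt (v s i))⁻¹ ≤ S s := by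
          apply Finset.single_le_sum (f := fun j => (μ s j) ^ 2 * (Real.sqrt (v s j))⁻¹)
            (fun j _ => by have := hsv_pos s hs j; positivity) (Finset.mem_univ i)
        have h2 : 0 ≤ c₂ * Q s := mul_nonneg hc₂_pos.le (hQ_nonneg s hs)
        have h3 := mul_le_mul_of_nonneg_left hterm hc₁_pos.le
        linarith
      done
    have h2 : IntegrableOn (fun s => (μ s i) ^ 2 * (Real.sqrt (v s i))⁻¹) (Set.Ici 1) := by
      have := h1.const_mul c₁⁻¹
      simpa [IntegrableOn, inv_mul_cancel_left₀ (ne_of_gt hc₁_pos)] using this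
    apply h2.congr_fun _ measurableSet_Ici
    intro s hs
    simp only [aux_rpow_mhalf (hvpos s hs i)]
  · have h1 : IntegrableOn (fun s =>
        c₂ * ((μ s i) ^ 2 * (Real.sqrt (v s i))⁻¹ * (v s i)⁻¹ * (gradient f (x s) i) ^ 2))
        (Set.Ici 1) := by
      apply master
      · refine continuousOn_const.mul
          (((((hμc i).pow 2).mul (hsvinvc i)).mul (ContinuousOn.inv₀ (hvc i) ?_)).mul
            ((hgc i).pow 2))
        intro t ht
        exact ne_of_gt (hvpos t ht i)
      · intro s hs
        have := hsv_pos s hs i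
        have := hvpos s hs i
        positivity
      · intro s hs
        have hterm : (μ s i) ^ 2 * (Real.sqrt (v s i))⁻¹ * (v s i)⁻¹ * (gradient f (x s) i) ^ 2
            ≤ Q s := by
          apply Finset.single_le_sum
            (f := fun j => (μ s j) ^ 2 * (Real.sqrt (v s j))⁻¹ * (v s j)⁻¹
              * (gradient f (x s) j) ^ 2)
            (fun j _ => by have := hsv_pos s hs j; have := hvpos s hs j; positivity)
            (Finset.mem_univ i)
        have h2 : 0 ≤ c₁ * S s := mul_nonneg hc₁_pos.le (hS_nonneg s hs)
        have h3 := mul_le_mul_of_nonneg_left hterm hc₂_pos.le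
        exact le_trans h3 (by linarith [h2])
    have h2 : IntegrableOn (fun s =>
        (μ s i) ^ 2 * (Real.sqrt (v s i))⁻¹ * (v s i)⁻¹ * (gradient f (x s) i) ^ 2)
        (Set.Ici 1) := by
      have := h1.const_mul c₂⁻¹
      simpa [IntegrableOn, inv_mul_cancel_left₀ (ne_of_gt hc₂_pos)] using this
    apply h2.congr_fun _ measurableSet_Ici
    intro s hs
    simp only [aux_rpow_m3half (hvpos s hs i)]
    ring
end

section
/- Let 0 < λ₂ < λ₁ < 1, let f : ℝ^d → ℝ be continuously differentiable and bounded below by 0 with Lipschitz continuous gradient, set α(t) = (1-(1-λ₁)^t)/√(1-(1-λ₂)^t), and let (μ, v, x) : [1,∞) → ℝ^d × ℝ^d × ℝ^d solve μ̇ᵢ = -λ₁ μᵢ + λ₁ ∇ᵢf(x), v̇ᵢ = -λ₂ vᵢ + λ₂ (∇ᵢf(x))², ẋᵢ = -(1/α(t)) μᵢ/√(vᵢ) with μ(1) = 0 and vᵢ(1) > 0 for all i. Then t ↦ ‖∇f(x(t))‖, t ↦ μ(t), t ↦ v(t), and t ↦ ẋ(t) are all bounded on [1,∞). -/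
open Real Filter

private lemma exp_mul_mono {w w' : ℝ → ℝ} {c : ℝ}
    (hw : ∀ s ≥ (1:ℝ), HasDerivAt w (w' s) s)
    (hpos : ∀ s ≥ (1:ℝ), 0 ≤ w' s + c * w s) :
    ∀ t ≥ (1:ℝ), Real.exp (c * 1) * w 1 ≤ Real.exp (c * t) * w t := by
  have hd : ∀ s ≥ (1:ℝ), HasDerivAt (fun s => Real.exp (c*s) * w s)
      (Real.exp (c*s) * (c*1) * w s + Real.exp (c*s) * w' s) s := by
    intro s hs
    exact (((hasDerivAt_id s).const_mul c).exp.mul (hw s hs))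
  have key : MonotoneOn (fun s => Real.exp (c*s) * w s) (Set.Ici 1) := by
    apply monotoneOn_of_deriv_nonneg (convex_Ici 1)
    · intro s hs
      exact (hd s hs).continuousAt.continuousWithinAt
    · intro s hs
      rw [interior_Ici] at hs
      exact (hd s hs.le).differentiableAt.differentiableWithinAt
    · intro s hs
      rw [interior_Ici] at hs
      rw [(hd s hs.le).deriv]
      have := hpos s hs.le
      nlinarith [Real.exp_pos (c*s)]
  intro t ht
  exact key (Set.mem_Ici.mpr le_rfl) (Set.mem_Ici.mpr ht) ht

private lemma anti_of_deriv {E E' : ℝ → ℝ}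
    (hE : ∀ s ≥ (1:ℝ), HasDerivAt E (E' s) s)
    (h : ∀ s ≥ (1:ℝ), E' s ≤ 0) : ∀ t ≥ (1:ℝ), E t ≤ E 1 := by
  have key : AntitoneOn E (Set.Ici 1) := by
    apply antitoneOn_of_deriv_nonpos (convex_Ici 1)
    · intro s hs; exact (hE s hs).continuousAt.continuousWithinAt
    · intro s hs
      rw [interior_Ici] at hs
      exact (hE s hs.le).differentiableAt.differentiableWithinAt
    · intro s hs
      rw [interior_Ici] at hs
      rw [(hE s hs.le).deriv]; exact h s hs.le
  intro t ht
  exact key (Set.mem_Ici.mpr le_rfl) (Set.mem_Ici.mpr ht) ht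

set_option maxHeartbeats 1000000 in
private lemma key_frac (a b t : ℝ) (ha0 : 0 < a) (hab : a < b) (hb1 : b < 1) (ht : 1 ≤ t) :
    (b ^ t * (-Real.log b)) / (2 * (1 - b ^ t)) ≤
      (2 * (1 - a) - (1 - b) / 2) + (a ^ t * (-Real.log a)) / (1 - a ^ t) := by
  have ht0 : 0 < t := lt_of_lt_of_le one_pos ht
  have ha1 : a < 1 := lt_trans hab hb1
  have hb0 : 0 < b := lt_trans ha0 hab
  have hA0 : 0 < a ^ t := Real.rpow_pos_of_pos ha0 t
  have hA1 : a ^ t < 1 := Real.rpow_lt_one ha0.le ha1 ht0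
  have hB0 : 0 < b ^ t := Real.rpow_pos_of_pos hb0 t
  have hB1 : b ^ t < 1 := Real.rpow_lt_one hb0.le hb1 ht0
  have hA1' : (0:ℝ) < 1 - a ^ t := by linarith
  have hB1' : (0:ℝ) < 1 - b ^ t := by linarith
  have hlogB : Real.log (b ^ t) = t * Real.log b := Real.log_rpow hb0 t
  have hlogA : Real.log (a ^ t) = t * Real.log a := Real.log_rpow ha0 t
  have hla0 : 0 ≤ -Real.log a := by simpa using Real.log_nonpos ha0.le ha1.le
  -- Step 1 : LHS ≤ 1/(2t)
  have step1 : (b ^ t * (-Real.log b)) / (2 * (1 - b ^ t)) ≤ 1 / (2 * t) := by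
    have h1 : -Real.log (b ^ t) + 1 ≤ (b ^ t)⁻¹ := by
      have := Real.add_one_le_exp (-Real.log (b ^ t))
      rwa [Real.exp_neg, Real.exp_log hB0] at this
    have h2 : b ^ t * (-Real.log b) * t ≤ 1 - b ^ t := by
      have h3 : b ^ t * (-Real.log (b ^ t)) + b ^ t ≤ 1 := by
        have h4 := mul_le_mul_of_nonneg_left h1 hB0.le
        calc b ^ t * (-Real.log (b ^ t)) + b ^ t = b ^ t * (-Real.log (b ^ t) + 1) := by ring
        _ ≤ b ^ t * (b ^ t)⁻¹ := h4
        _ = 1 := mul_inv_cancel₀ (ne_of_gt hB0)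
      rw [hlogB] at h3; nlinarith
    rw [div_le_div_iff₀ (by linarith) (by linarith)]
    nlinarith
  have hrest0 : 0 ≤ (a ^ t * (-Real.log a)) / (1 - a ^ t) :=
    div_nonneg (mul_nonneg hA0.le hla0) hA1'.le
  by_cases hcase : 1/3 ≤ t * (1 - a)
  · have h5 : 1 / (2 * t) ≤ 3 / 2 * (1 - a) := by
      rw [div_le_iff₀ (by linarith)]; nlinarith
    have h4 : (3:ℝ) / 2 * (1 - a) ≤ 2 * (1 - a) - (1 - b) / 2 := by nlinarith
    linarith [step1]
  · push_neg at hcase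
    have ha23 : 2/3 < a := by nlinarith [mul_le_mul_of_nonneg_right ht (by linarith : (0:ℝ) ≤ 1 - a)]
    have hla : -Real.log a ≤ (1 - a)/a := by
      have h1 := Real.log_le_sub_one_of_pos (show (0:ℝ) < a⁻¹ by positivity)
      rw [Real.log_inv] at h1
      have h2 : (1 - a)/a = a⁻¹ - 1 := by field_simp
      linarith [h2 ▸ h1]
    have hy : t * (-Real.log a) < 1/2 := by
      have h5 : t * (-Real.log a) ≤ (t * (1-a))/a :=
        le_trans (mul_le_mul_of_nonneg_left hla ht0.le) (by rw [mul_div_assoc])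
      have h6 : (t * (1-a))/a < 1/2 := by
        rw [div_lt_iff₀ ha0]; nlinarith
      linarith
    have hy0 : 0 < -Real.log a := by
      have := Real.log_neg ha0 ha1; linarith
    have hyy : t * (-Real.log a) = -Real.log (a ^ t) := by rw [hlogA]; ring
    have hey : Real.exp (t * (-Real.log a)) = (a ^ t)⁻¹ := by
      rw [hyy, Real.exp_neg, Real.exp_log hA0]
    have hypos : 0 < t * (-Real.log a) := by positivity
    have hexp2 : Real.exp (t * (-Real.log a)) ≤ 1 + 2 * (t * (-Real.log a)) := by
      have h1 : 1 - t * (-Real.log a) ≤ Real.exp (-(t * (-Real.log a))) := by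
        have := Real.add_one_le_exp (-(t * (-Real.log a))); linarith
      have h2 : Real.exp (t * (-Real.log a)) * (1 - t * (-Real.log a)) ≤ 1 := by
        have := mul_le_mul_of_nonneg_left h1 (Real.exp_pos (t * (-Real.log a))).le
        rwa [← Real.exp_add, add_neg_cancel, Real.exp_zero] at this
      nlinarith [Real.exp_pos (t * (-Real.log a))]
    have h7 : 1 - a ^ t ≤ 2 * (t * (-Real.log a)) * a ^ t := by
      rw [hey] at hexp2
      have h8 := mul_le_mul_of_nonneg_right hexp2 hA0.le
      rw [inv_mul_cancel₀ (ne_of_gt hA0)] at h8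
      nlinarith
    have h8 : 1 / (2 * t) ≤ (a ^ t * (-Real.log a)) / (1 - a ^ t) := by
      rw [div_le_div_iff₀ (by linarith) hA1']
      linarith [h7]
    have h9 : (0:ℝ) < 2 * (1 - a) - (1 - b)/2 := by linarith
    linarith [step1]

set_option maxHeartbeats 1000000 in
private lemma grad_sq_le {d : ℕ} (f : EuclideanSpace ℝ (Fin d) → ℝ) (L' : ℝ) (hL' : 0 < L')
    (hf : ContDiff ℝ 1 f) (hf0 : ∀ y, 0 ≤ f y)
    (hlip : ∀ u w : EuclideanSpace ℝ (Fin d), ‖gradient f u - gradient f w‖ ≤ L' * ‖u - w‖)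
    (p : EuclideanSpace ℝ (Fin d)) :
    ‖gradient f p‖ ^ 2 ≤ 2 * L' * f p := by
  have hdiff : Differentiable ℝ f := hf.differentiable one_ne_zero
  have hgradcont : Continuous (gradient f) := by
    have : LipschitzWith (Real.toNNReal L') (gradient f) := by
      rw [lipschitzWith_iff_norm_sub_le]
      intro u w
      simpa [Real.coe_toNNReal L' hL'.le] using hlip u w
    exact this.continuous
  have hgrad : ∀ (q w : EuclideanSpace ℝ (Fin d)),
      (fderiv ℝ f q) w = inner ℝ (gradient f q) w := by
    intro q w
    rw [gradient, ← InnerProductSpace.toDual_apply_apply,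
      LinearIsometryEquiv.apply_symm_apply]
  set g := gradient f p with hg
  set w : EuclideanSpace ℝ (Fin d) := -(1/L') • g with hw
  set c : ℝ → EuclideanSpace ℝ (Fin d) := fun s => p + s • w with hc
  have hcs : ∀ s : ℝ, HasDerivAt c w s := by
    intro s
    have := ((hasDerivAt_id s).smul_const w).const_add p
    rw [one_smul] at this
    exact this
  have hφ : ∀ s : ℝ, HasDerivAt (fun s => f (c s)) (inner ℝ (gradient f (c s)) w : ℝ) s := by
    intro s
    have h1 := (hdiff (c s)).hasFDerivAt.comp_hasDerivAt s (hcs s)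
    rw [hgrad (c s) w] at h1
    exact h1
  have hcont : Continuous (fun s : ℝ => (inner ℝ (gradient f (c s)) w : ℝ)) := by
    exact (hgradcont.comp (by continuity)).inner continuous_const
  have hftc : ∫ s in (0:ℝ)..1, (inner ℝ (gradient f (c s)) w : ℝ) = f (c 1) - f (c 0) := by
    exact intervalIntegral.integral_eq_sub_of_hasDerivAt
      (fun s _ => hφ s) (hcont.intervalIntegrable 0 1)
  have hbound : ∀ s ∈ Set.Icc (0:ℝ) 1,
      (inner ℝ (gradient f (c s)) w : ℝ) ≤ inner ℝ g w + L' * ‖w‖^2 * s := by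
    intro s hs
    have h1 : (inner ℝ (gradient f (c s)) w : ℝ) - inner ℝ g w = inner ℝ (gradient f (c s) - g) w := by
      rw [inner_sub_left]
    have h2 : (inner ℝ (gradient f (c s) - g) w : ℝ) ≤ ‖gradient f (c s) - g‖ * ‖w‖ :=
      real_inner_le_norm _ _
    have h3 : ‖gradient f (c s) - g‖ ≤ L' * ‖c s - p‖ := hlip (c s) p
    have h4 : ‖c s - p‖ = s * ‖w‖ := by
      rw [hc]; simp [norm_smul, abs_of_nonneg hs.1]
    have h5 := mul_le_mul_of_nonneg_right h3 (norm_nonneg w)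
    calc (inner ℝ (gradient f (c s)) w : ℝ)
        = inner ℝ g w + inner ℝ (gradient f (c s) - g) w := by rw [← h1]; ring
      _ ≤ inner ℝ g w + ‖gradient f (c s) - g‖ * ‖w‖ := by linarith
      _ ≤ inner ℝ g w + L' * ‖c s - p‖ * ‖w‖ := by linarith
      _ = inner ℝ g w + L' * ‖w‖^2 * s := by rw [h4]; ring
  have e2 : ∫ s in (0:ℝ)..1, L' * ‖w‖^2 * s = L' * ‖w‖^2 / 2 := by
    rw [intervalIntegral.integral_const_mul, integral_id]
    ring
  have hint2 : ∫ s in (0:ℝ)..1, ((inner ℝ g w : ℝ) + L' * ‖w‖^2 * s)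
      = inner ℝ g w + L' * ‖w‖^2 / 2 := by
    rw [intervalIntegral.integral_add intervalIntegrable_const
      (((by fun_prop : Continuous fun s : ℝ => (L' * ‖w‖^2) * s)).intervalIntegrable 0 1),
      e2, intervalIntegral.integral_const]
    norm_num
  have hmono : ∫ s in (0:ℝ)..1, (inner ℝ (gradient f (c s)) w : ℝ)
      ≤ ∫ s in (0:ℝ)..1, ((inner ℝ g w : ℝ) + L' * ‖w‖^2 * s) := by
    apply intervalIntegral.integral_mono_on (by norm_num)
      (hcont.intervalIntegrable 0 1)
      (((continuous_const.add (continuous_const.mul continuous_id) : Continuous fun s : ℝ => (inner ℝ g w : ℝ) + (L' * ‖w‖^2) * s)).intervalIntegrable 0 1)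
    exact hbound
  have hc0 : c 0 = p := by simp [hc]
  have hinngw : (inner ℝ g w : ℝ) = -(1/L') * ‖g‖^2 := by
    rw [hw, real_inner_smul_right, real_inner_self_eq_norm_sq]
  have hnw : ‖w‖^2 = (1/L')^2 * ‖g‖^2 := by
    rw [hw, norm_smul, mul_pow, Real.norm_eq_abs, sq_abs]
    congr 1
    ring
  have hfc1 : 0 ≤ f (c 1) := hf0 _
  rw [hftc] at hmono
  rw [hint2, hc0, hinngw, hnw] at hmono
  have hkey : 0 ≤ f p - ‖g‖^2/(2*L') := by
    have e1 : -(1 / L') * ‖g‖ ^ 2 + L' * ((1 / L') ^ 2 * ‖g‖ ^ 2) / 2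
        = -(‖g‖^2/(2*L')) := by field_simp; ring
    rw [e1] at hmono
    linarith
  have h5 : ‖g‖^2/(2*L') ≤ f p := by linarith
  rw [div_le_iff₀ (by positivity)] at h5
  linarith [h5]


private lemma coord_le_norm {d : ℕ} (w : EuclideanSpace ℝ (Fin d)) (i : Fin d) :
    |w i| ≤ ‖w‖ := by
  rw [EuclideanSpace.norm_eq, ← Real.sqrt_sq (abs_nonneg (w i)), sq_abs]
  apply Real.sqrt_le_sqrt
  have : (w i)^2 = ‖w i‖^2 := by rw [Real.norm_eq_abs, sq_abs]
  rw [this]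
  exact Finset.single_le_sum (f := fun j => ‖w j‖^2) (fun j _ => sq_nonneg _) (Finset.mem_univ i)

private lemma euclid_norm_le {d : ℕ} (w : EuclideanSpace ℝ (Fin d)) (c : ℝ) (hc : 0 ≤ c)
    (h : ∀ i, |w i| ≤ c) : ‖w‖ ≤ Real.sqrt d * c := by
  rw [EuclideanSpace.norm_eq]
  have h1 : ∑ i, ‖w i‖^2 ≤ ∑ _i : Fin d, c^2 := by
    apply Finset.sum_le_sum
    intro i _
    rw [Real.norm_eq_abs]
    nlinarith [h i, abs_nonneg (w i)]
  calc Real.sqrt (∑ i, ‖w i‖^2) ≤ Real.sqrt (d * c^2) := by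
        apply Real.sqrt_le_sqrt; simpa using h1
  _ = Real.sqrt d * c := by
        rw [Real.sqrt_mul (Nat.cast_nonneg d), Real.sqrt_sq hc]

private lemma coord_ineq (lam₁ lam₂ m z V R K : ℝ) (h₂ : 0 < lam₂) (h₁₂ : lam₂ < lam₁)
    (hV : 0 < V) (hR : 0 < R) (hK : K ≤ (2*lam₁ - lam₂/2) * R) :
    z * (-R * (m / Real.sqrt V)) + (1/(2*lam₁)) * (K * (m^2/Real.sqrt V)
      + R * ((2*m*(-lam₁*m+lam₁*z) * Real.sqrt V - m^2 * ((-lam₂*V + lam₂*z^2)/(2*Real.sqrt V)))/V)) ≤ 0 := by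
  have hlam₁ : 0 < lam₁ := lt_trans h₂ h₁₂
  obtain ⟨P, hP, rfl⟩ : ∃ P, 0 < P ∧ P^2 = V :=
    ⟨Real.sqrt V, Real.sqrt_pos.mpr hV, Real.sq_sqrt hV.le⟩
  rw [Real.sqrt_sq hP.le]
  have h9 : 0 ≤ P^2 * m^2 * ((2*lam₁ - lam₂/2)*R - K) := by
    apply mul_nonneg (mul_nonneg (sq_nonneg P) (sq_nonneg m))
    linarith
  have h10 : 0 ≤ R * lam₂ * m^2 * z^2 := by positivity
  have key : z * (-R * (m / P)) + (1/(2*lam₁)) * (K * (m^2/P)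
      + R * ((2*m*(-lam₁*m+lam₁*z) * P - m^2 * ((-lam₂*P^2 + lam₂*z^2)/(2*P)))/P^2))
      = (2*P^2*m^2*(K - 2*lam₁*R + R*lam₂/2) - R*lam₂*m^2*z^2) / (4*lam₁*P^3) := by
    field_simp
    ring
  rw [key]
  apply div_nonpos_of_nonpos_of_nonneg
  · nlinarith
  · positivity

set_option maxHeartbeats 2000000 in
/-- Trajectory boundedness for continuous-time Adam: along any solution, the
gradient `‖∇f(x(t))‖`, the moment estimates `μ(t)`, `v(t)`, and the velocity
`ẋ(t)` (whose coordinates are `-(1/α(t)) μᵢ(t)/√(vᵢ(t))`) are all bounded on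
`[1,∞)`. -/
theorem adam_trajectory_bounded
    (d : ℕ) (lam₁ lam₂ : ℝ)
    (hlam₂ : 0 < lam₂) (hlam₁₂ : lam₂ < lam₁) (hlam₁ : lam₁ < 1)
    (f : EuclideanSpace ℝ (Fin d) → ℝ) (L : NNReal)
    (hf : ContDiff ℝ 1 f) (hf0 : ∀ y, 0 ≤ f y)
    (hlip : LipschitzWith L (gradient f))
    (α : ℝ → ℝ)
    (hα : ∀ t : ℝ, α t = (1 - (1 - lam₁) ^ t) / Real.sqrt (1 - (1 - lam₂) ^ t))
    (μ v x : ℝ → EuclideanSpace ℝ (Fin d))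
    (hμ : ∀ t ≥ (1 : ℝ), ∀ i : Fin d, HasDerivAt (fun s => μ s i)
      (-lam₁ * μ t i + lam₁ * gradient f (x t) i) t)
    (hv : ∀ t ≥ (1 : ℝ), ∀ i : Fin d, HasDerivAt (fun s => v s i)
      (-lam₂ * v t i + lam₂ * (gradient f (x t) i) ^ 2) t)
    (hx : ∀ t ≥ (1 : ℝ), ∀ i : Fin d, HasDerivAt (fun s => x s i)
      (-(1 / α t) * (μ t i / Real.sqrt (v t i))) t)
    (hμ1 : μ 1 = 0) (hv1 : ∀ i : Fin d, 0 < v 1 i) :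
    ∃ M : ℝ, ∀ t ≥ (1 : ℝ),
      ‖gradient f (x t)‖ ≤ M ∧ ‖μ t‖ ≤ M ∧ ‖v t‖ ≤ M ∧
        ∀ i : Fin d, |(1 / α t) * (μ t i / Real.sqrt (v t i))| ≤ M := by
  have hlam₁0 : 0 < lam₁ := lt_trans hlam₂ hlam₁₂
  have hlam₂1 : lam₂ < 1 := lt_trans hlam₁₂ hlam₁
  have ha0 : (0:ℝ) < 1 - lam₁ := by linarith
  have ha1 : (1:ℝ) - lam₁ < 1 := by linarith
  have hb0 : (0:ℝ) < 1 - lam₂ := by linarith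
  have hb1 : (1:ℝ) - lam₂ < 1 := by linarith
  have hab : (1:ℝ) - lam₁ < 1 - lam₂ := by linarith
  -- step 1 : positivity of v and the ratio bound μ² ≤ (λ₁/λ₂) v
  have hq : ∀ t ≥ (1:ℝ), ∀ i : Fin d, 0 < lam₁/lam₂ * v t i - (μ t i)^2 := by
    intro t ht i
    have hw : ∀ s ≥ (1:ℝ), HasDerivAt (fun s => lam₁/lam₂ * v s i - (μ s i)^2)
        (lam₁/lam₂ * (-lam₂ * v s i + lam₂ * (gradient f (x s) i)^2)
          - 2 * μ s i * (-lam₁ * μ s i + lam₁ * gradient f (x s) i)) s := by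
      intro s hs
      have h1 : HasDerivAt (fun s => (μ s i)^2)
          (2 * μ s i * (-lam₁ * μ s i + lam₁ * gradient f (x s) i)) s := by
        have := (hμ s hs i).fun_pow 2
        simpa using this
      exact ((hv s hs i).const_mul (lam₁/lam₂)).sub h1
    have hpos : ∀ s ≥ (1:ℝ), 0 ≤ (lam₁/lam₂ * (-lam₂ * v s i + lam₂ * (gradient f (x s) i)^2)
        - 2 * μ s i * (-lam₁ * μ s i + lam₁ * gradient f (x s) i))
        + lam₂ * (lam₁/lam₂ * v s i - (μ s i)^2) := by
      intro s hs
      have hc1 : lam₁/lam₂ * lam₂ = lam₁ := div_mul_cancel₀ lam₁ (ne_of_gt hlam₂)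
      nlinarith [sq_nonneg (gradient f (x s) i - μ s i), sq_nonneg (μ s i)]
    have h2 := exp_mul_mono hw hpos t ht
    have h3 : μ 1 i = 0 := by rw [hμ1]; rfl
    have h4 : 0 < lam₁/lam₂ * v 1 i - (μ 1 i)^2 := by
      rw [h3]
      have := hv1 i
      have : 0 < lam₁/lam₂ * v 1 i := by positivity
      linarith
    nlinarith [Real.exp_pos (lam₂ * t), Real.exp_pos (lam₂ * 1)]
  have hvpos : ∀ t ≥ (1:ℝ), ∀ i : Fin d, 0 < v t i := by
    intro t ht i
    have := hq t ht i
    nlinarith [sq_nonneg (μ t i), div_pos hlam₁0 hlam₂]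
  have hratio : ∀ t ≥ (1:ℝ), ∀ i : Fin d, (μ t i)^2 ≤ lam₁/lam₂ * v t i := by
    intro t ht i
    have := hq t ht i
    linarith
  have hPpos : ∀ t ≥ (1:ℝ), ∀ i : Fin d, 0 < Real.sqrt (v t i) :=
    fun t ht i => Real.sqrt_pos.mpr (hvpos t ht i)
  -- facts about N and D
  have hAt : ∀ t ≥ (1:ℝ), (1 - lam₁) ^ t ≤ 1 - lam₁ := by
    intro t ht
    have := Real.rpow_le_rpow_of_exponent_ge ha0 ha1.le ht
    rwa [Real.rpow_one] at this
  have hBt : ∀ t ≥ (1:ℝ), (1 - lam₂) ^ t ≤ 1 - lam₂ := by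
    intro t ht
    have := Real.rpow_le_rpow_of_exponent_ge hb0 hb1.le ht
    rwa [Real.rpow_one] at this
  have hNge : ∀ t ≥ (1:ℝ), lam₁ ≤ 1 - (1 - lam₁) ^ t := by
    intro t ht; have := hAt t ht; linarith
  have hNpos : ∀ t ≥ (1:ℝ), 0 < 1 - (1 - lam₁) ^ t := by
    intro t ht; have := hNge t ht; linarith
  have hBpos : ∀ t ≥ (1:ℝ), 0 < 1 - (1 - lam₂) ^ t := by
    intro t ht; have := hBt t ht; linarith
  have hDpos : ∀ t ≥ (1:ℝ), 0 < Real.sqrt (1 - (1 - lam₂) ^ t) :=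
    fun t ht => Real.sqrt_pos.mpr (hBpos t ht)
  have hDle1 : ∀ t ≥ (1:ℝ), Real.sqrt (1 - (1 - lam₂) ^ t) ≤ 1 := by
    intro t ht
    have h1 : (1:ℝ) - (1 - lam₂) ^ t ≤ 1 := by
      nlinarith [Real.rpow_pos_of_pos hb0 t]
    calc Real.sqrt (1 - (1 - lam₂) ^ t) ≤ Real.sqrt 1 := Real.sqrt_le_sqrt h1
    _ = 1 := Real.sqrt_one
  have hNle1 : ∀ t ≥ (1:ℝ), 1 - (1 - lam₁) ^ t ≤ 1 := by
    intro t ht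
    nlinarith [Real.rpow_pos_of_pos ha0 t]
  have hαeq : ∀ t, α t = (1 - (1 - lam₁) ^ t) / Real.sqrt (1 - (1 - lam₂) ^ t) := hα
  have hαinv : ∀ t ≥ (1:ℝ), 1 / α t
      = Real.sqrt (1 - (1 - lam₂) ^ t) / (1 - (1 - lam₁) ^ t) := by
    intro t ht
    rw [hαeq t, one_div_div]
  -- derivatives of N and D
  have hNd : ∀ t : ℝ, HasDerivAt (fun s => 1 - (1 - lam₁) ^ s)
      ((1 - lam₁) ^ t * (-Real.log (1 - lam₁))) t := by
    intro t
    have := ((Real.hasStrictDerivAt_const_rpow ha0 t).hasDerivAt).const_sub 1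
    rw [mul_neg]
    exact this
  have hBd : ∀ t : ℝ, HasDerivAt (fun s => 1 - (1 - lam₂) ^ s)
      ((1 - lam₂) ^ t * (-Real.log (1 - lam₂))) t := by
    intro t
    have := ((Real.hasStrictDerivAt_const_rpow hb0 t).hasDerivAt).const_sub 1
    rw [mul_neg]
    exact this
  have hDd : ∀ t ≥ (1:ℝ), HasDerivAt (fun s => Real.sqrt (1 - (1 - lam₂) ^ s))
      ((1 - lam₂) ^ t * (-Real.log (1 - lam₂)) / (2 * Real.sqrt (1 - (1 - lam₂) ^ t))) t := by
    intro t ht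
    exact (hBd t).sqrt (ne_of_gt (hBpos t ht))
  -- derivative of D/N and the key bound on it
  have hDN : ∀ t ≥ (1:ℝ), HasDerivAt
      (fun s => Real.sqrt (1 - (1 - lam₂) ^ s) / (1 - (1 - lam₁) ^ s))
      (((1 - lam₂) ^ t * (-Real.log (1 - lam₂)) / (2 * Real.sqrt (1 - (1 - lam₂) ^ t))
          * (1 - (1 - lam₁) ^ t)
        - Real.sqrt (1 - (1 - lam₂) ^ t) * ((1 - lam₁) ^ t * (-Real.log (1 - lam₁))))
        / (1 - (1 - lam₁) ^ t) ^ 2) t := by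
    intro t ht
    exact (hDd t ht).div (hNd t) (ne_of_gt (hNpos t ht))
  have hKle : ∀ t ≥ (1:ℝ),
      ((1 - lam₂) ^ t * (-Real.log (1 - lam₂)) / (2 * Real.sqrt (1 - (1 - lam₂) ^ t))
          * (1 - (1 - lam₁) ^ t)
        - Real.sqrt (1 - (1 - lam₂) ^ t) * ((1 - lam₁) ^ t * (-Real.log (1 - lam₁))))
        / (1 - (1 - lam₁) ^ t) ^ 2
      ≤ (2 * lam₁ - lam₂/2) * (Real.sqrt (1 - (1 - lam₂) ^ t) / (1 - (1 - lam₁) ^ t)) := by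
    intro t ht
    have h1 := key_frac (1 - lam₁) (1 - lam₂) t ha0 hab hb1 ht
    have e1 : 2 * (1 - (1 - lam₁)) - (1 - (1 - lam₂)) / 2 = 2 * lam₁ - lam₂/2 := by ring
    rw [e1] at h1
    have hD2 : Real.sqrt (1 - (1 - lam₂) ^ t) ^ 2 = 1 - (1 - lam₂) ^ t :=
      Real.sq_sqrt (hBpos t ht).le
    have hDp := hDpos t ht
    have hNp := hNpos t ht
    have key : ((1 - lam₂) ^ t * (-Real.log (1 - lam₂)) / (2 * Real.sqrt (1 - (1 - lam₂) ^ t))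
          * (1 - (1 - lam₁) ^ t)
        - Real.sqrt (1 - (1 - lam₂) ^ t) * ((1 - lam₁) ^ t * (-Real.log (1 - lam₁))))
        / (1 - (1 - lam₁) ^ t) ^ 2
        = (Real.sqrt (1 - (1 - lam₂) ^ t) / (1 - (1 - lam₁) ^ t))
          * ((1 - lam₂) ^ t * (-Real.log (1 - lam₂)) / (2 * (1 - (1 - lam₂) ^ t))
            - (1 - lam₁) ^ t * (-Real.log (1 - lam₁)) / (1 - (1 - lam₁) ^ t)) := by
      rw [← hD2]
      field_simp
      rw [Real.sq_sqrt (sq_nonneg _)]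
    rw [key]
    rw [mul_comm ((2:ℝ) * lam₁ - lam₂/2) _]
    apply mul_le_mul_of_nonneg_left _ (by positivity)
    linarith [h1]
  -- vector-valued derivative of x and derivative of f ∘ x
  have hgrad : ∀ (q w : EuclideanSpace ℝ (Fin d)),
      (fderiv ℝ f q) w = inner ℝ (gradient f q) w := by
    intro q w
    rw [gradient, ← InnerProductSpace.toDual_apply_apply, LinearIsometryEquiv.apply_symm_apply]
  have hxd : ∀ t ≥ (1:ℝ), HasDerivAt x
      (WithLp.toLp 2 (fun i => -(1 / α t) * (μ t i / Real.sqrt (v t i))) : EuclideanSpace ℝ (Fin d)) t := by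
    intro t ht
    have hpi : HasDerivAt (fun s => (fun i => x s i : Fin d → ℝ))
        (fun i => -(1 / α t) * (μ t i / Real.sqrt (v t i))) t :=
      hasDerivAt_pi.mpr (fun i => hx t ht i)
    exact ((PiLp.continuousLinearEquiv 2 ℝ (fun _ : Fin d => ℝ)).symm.toContinuousLinearMap.hasFDerivAt).comp_hasDerivAt t hpi
  have hfd : ∀ t ≥ (1:ℝ), HasDerivAt (fun s => f (x s))
      (∑ i, gradient f (x t) i * (-(1 / α t) * (μ t i / Real.sqrt (v t i)))) t := by
    intro t ht
    have h1 := (hf.differentiable one_ne_zero (x t)).hasFDerivAt.comp_hasDerivAt t (hxd t ht)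
    have h2 : (fderiv ℝ f (x t))
        (WithLp.toLp 2 (fun i => -(1 / α t) * (μ t i / Real.sqrt (v t i))) : EuclideanSpace ℝ (Fin d))
        = ∑ i, gradient f (x t) i * (-(1 / α t) * (μ t i / Real.sqrt (v t i))) := by
      rw [hgrad, PiLp.inner_apply]
      simp [RCLike.inner_apply, starRingEnd_apply]
      exact Finset.sum_congr rfl (fun _ _ => mul_comm _ _)
    rw [h2] at h1
    exact h1
  -- derivative of S
  have hSd : ∀ t ≥ (1:ℝ), HasDerivAt (fun s => ∑ i, (μ s i)^2 / Real.sqrt (v s i))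
      (∑ i, (2*(μ t i)*(-lam₁*(μ t i)+lam₁*(gradient f (x t) i)) * Real.sqrt (v t i)
        - (μ t i)^2 * ((-lam₂*(v t i) + lam₂*(gradient f (x t) i)^2)/(2*Real.sqrt (v t i))))
        / (v t i)) t := by
    intro t ht
    apply HasDerivAt.fun_sum
    intro i _
    have h1 : HasDerivAt (fun s => (μ s i)^2)
        (2*(μ t i)*(-lam₁*(μ t i)+lam₁*(gradient f (x t) i))) t := by
      simpa using (hμ t ht i).fun_pow 2
    have h2 := (hv t ht i).sqrt (ne_of_gt (hvpos t ht i))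
    have h3 := h1.div h2 (ne_of_gt (hPpos t ht i))
    rw [Real.sq_sqrt (hvpos t ht i).le] at h3
    exact h3
  -- the Lyapunov function is nonincreasing
  have hEd : ∀ t ≥ (1:ℝ), HasDerivAt
      (fun s => f (x s) + (1/(2*lam₁)) * (Real.sqrt (1 - (1 - lam₂) ^ s) / (1 - (1 - lam₁) ^ s)
        * ∑ i, (μ s i)^2 / Real.sqrt (v s i)))
      ((∑ i, gradient f (x t) i * (-(1 / α t) * (μ t i / Real.sqrt (v t i))))
        + (1/(2*lam₁)) * ((((1 - lam₂) ^ t * (-Real.log (1 - lam₂)) / (2 * Real.sqrt (1 - (1 - lam₂) ^ t))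
          * (1 - (1 - lam₁) ^ t)
        - Real.sqrt (1 - (1 - lam₂) ^ t) * ((1 - lam₁) ^ t * (-Real.log (1 - lam₁))))
        / (1 - (1 - lam₁) ^ t) ^ 2) * (∑ i, (μ t i)^2 / Real.sqrt (v t i))
        + (Real.sqrt (1 - (1 - lam₂) ^ t) / (1 - (1 - lam₁) ^ t))
          * (∑ i, (2*(μ t i)*(-lam₁*(μ t i)+lam₁*(gradient f (x t) i)) * Real.sqrt (v t i)
        - (μ t i)^2 * ((-lam₂*(v t i) + lam₂*(gradient f (x t) i)^2)/(2*Real.sqrt (v t i))))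
        / (v t i)))) t := by
    intro t ht
    exact (hfd t ht).add (((hDN t ht).mul (hSd t ht)).const_mul (1/(2*lam₁)))
  have hE'le : ∀ t ≥ (1:ℝ),
      ((∑ i, gradient f (x t) i * (-(1 / α t) * (μ t i / Real.sqrt (v t i))))
        + (1/(2*lam₁)) * ((((1 - lam₂) ^ t * (-Real.log (1 - lam₂)) / (2 * Real.sqrt (1 - (1 - lam₂) ^ t))
          * (1 - (1 - lam₁) ^ t)
        - Real.sqrt (1 - (1 - lam₂) ^ t) * ((1 - lam₁) ^ t * (-Real.log (1 - lam₁))))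
        / (1 - (1 - lam₁) ^ t) ^ 2) * (∑ i, (μ t i)^2 / Real.sqrt (v t i))
        + (Real.sqrt (1 - (1 - lam₂) ^ t) / (1 - (1 - lam₁) ^ t))
          * (∑ i, (2*(μ t i)*(-lam₁*(μ t i)+lam₁*(gradient f (x t) i)) * Real.sqrt (v t i)
        - (μ t i)^2 * ((-lam₂*(v t i) + lam₂*(gradient f (x t) i)^2)/(2*Real.sqrt (v t i))))
        / (v t i)))) ≤ 0 := by
    intro t ht
    simp only [hαinv t ht]
    rw [Finset.mul_sum, Finset.mul_sum, ← Finset.sum_add_distrib, Finset.mul_sum,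
      ← Finset.sum_add_distrib]
    apply Finset.sum_nonpos
    intro i _
    exact coord_ineq lam₁ lam₂ (μ t i) (gradient f (x t) i) (v t i)
      (Real.sqrt (1 - (1 - lam₂) ^ t) / (1 - (1 - lam₁) ^ t))
      ((((1 - lam₂) ^ t * (-Real.log (1 - lam₂)) / (2 * Real.sqrt (1 - (1 - lam₂) ^ t))
          * (1 - (1 - lam₁) ^ t)
        - Real.sqrt (1 - (1 - lam₂) ^ t) * ((1 - lam₁) ^ t * (-Real.log (1 - lam₁))))
        / (1 - (1 - lam₁) ^ t) ^ 2))
      hlam₂ hlam₁₂ (hvpos t ht i) (div_pos (hDpos t ht) (hNpos t ht)) (hKle t ht)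
  have hfxle : ∀ t ≥ (1:ℝ), f (x t) ≤ f (x 1) := by
    intro t ht
    have h1 := anti_of_deriv hEd hE'le t ht
    have hS1 : (∑ i, (μ 1 i)^2 / Real.sqrt (v 1 i)) = 0 := by
      apply Finset.sum_eq_zero
      intro i _
      rw [show μ 1 i = 0 from by rw [hμ1]; rfl]
      simp
    rw [hS1, mul_zero, mul_zero, add_zero] at h1
    have hSnn : 0 ≤ ∑ i, (μ t i)^2 / Real.sqrt (v t i) := by
      apply Finset.sum_nonneg
      intro i _
      positivity
    have h2 : 0 ≤ (1/(2*lam₁)) * (Real.sqrt (1 - (1 - lam₂) ^ t) / (1 - (1 - lam₁) ^ t)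
        * ∑ i, (μ t i)^2 / Real.sqrt (v t i)) := by
      have := hDpos t ht
      have := hNpos t ht
      positivity
    linarith
  -- gradient bound along the trajectory
  have hL' : (0:ℝ) < (L:ℝ) + 1 := by positivity
  have hlip' : ∀ u w : EuclideanSpace ℝ (Fin d),
      ‖gradient f u - gradient f w‖ ≤ ((L:ℝ)+1) * ‖u - w‖ := by
    intro u w
    have h1 := lipschitzWith_iff_norm_sub_le.mp hlip u w
    nlinarith [norm_nonneg (u - w)]
  have hGnn : 0 ≤ Real.sqrt (2*((L:ℝ)+1)*f (x 1)) := Real.sqrt_nonneg _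
  have hG2 : (Real.sqrt (2*((L:ℝ)+1)*f (x 1)))^2 = 2*((L:ℝ)+1)*f (x 1) := by
    apply Real.sq_sqrt
    have := hf0 (x 1)
    positivity
  have hgb : ∀ t ≥ (1:ℝ), ‖gradient f (x t)‖ ≤ Real.sqrt (2*((L:ℝ)+1)*f (x 1)) := by
    intro t ht
    have h1 := grad_sq_le f ((L:ℝ)+1) hL' hf hf0 hlip' (x t)
    have h2 : ‖gradient f (x t)‖^2 ≤ 2*((L:ℝ)+1)*f (x 1) := by
      have h3 := mul_le_mul_of_nonneg_left (hfxle t ht) (by positivity : (0:ℝ) ≤ 2*((L:ℝ)+1))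
      linarith
    rw [← Real.sqrt_sq (norm_nonneg (gradient f (x t)))]
    exact Real.sqrt_le_sqrt (by linarith [hG2])
  have hgcb : ∀ t ≥ (1:ℝ), ∀ i, |gradient f (x t) i| ≤ Real.sqrt (2*((L:ℝ)+1)*f (x 1)) :=
    fun t ht i => le_trans (coord_le_norm _ i) (hgb t ht)
  have hgcb2 : ∀ t ≥ (1:ℝ), ∀ i, (gradient f (x t) i)^2 ≤ (Real.sqrt (2*((L:ℝ)+1)*f (x 1)))^2 := by
    intro t ht i
    have h1 := hgcb t ht i
    nlinarith [abs_nonneg (gradient f (x t) i), sq_abs (gradient f (x t) i)]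
  -- bound on μ coordinates
  have hμb : ∀ t ≥ (1:ℝ), ∀ i, (μ t i)^2 ≤ (Real.sqrt (2*((L:ℝ)+1)*f (x 1)))^2 := by
    intro t ht i
    have hw : ∀ s ≥ (1:ℝ), HasDerivAt (fun s => (Real.sqrt (2*((L:ℝ)+1)*f (x 1)))^2 - (μ s i)^2)
        (-(2 * μ s i * (-lam₁ * μ s i + lam₁ * gradient f (x s) i))) s := by
      intro s hs
      have h1 : HasDerivAt (fun s => (μ s i)^2)
          (2 * μ s i * (-lam₁ * μ s i + lam₁ * gradient f (x s) i)) s := by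
        simpa using (hμ s hs i).fun_pow 2
      simpa using h1.const_sub ((Real.sqrt (2*((L:ℝ)+1)*f (x 1)))^2)
    have hpos : ∀ s ≥ (1:ℝ), 0 ≤ (-(2 * μ s i * (-lam₁ * μ s i + lam₁ * gradient f (x s) i)))
        + lam₁ * ((Real.sqrt (2*((L:ℝ)+1)*f (x 1)))^2 - (μ s i)^2) := by
      intro s hs
      nlinarith [sq_nonneg (μ s i - gradient f (x s) i), hgcb2 s hs i]
    have h2 := exp_mul_mono hw hpos t ht
    have h3 : μ 1 i = 0 := by rw [hμ1]; rfl
    rw [h3] at h2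
    nlinarith [Real.exp_pos (lam₁ * t), Real.exp_pos (lam₁ * 1)]
  -- bound on v coordinates
  have hvb : ∀ t ≥ (1:ℝ), ∀ i, v t i ≤ ‖v 1‖ + (Real.sqrt (2*((L:ℝ)+1)*f (x 1)))^2 := by
    intro t ht i
    have hw : ∀ s ≥ (1:ℝ), HasDerivAt
        (fun s => ‖v 1‖ + (Real.sqrt (2*((L:ℝ)+1)*f (x 1)))^2 - v s i)
        (-(-lam₂ * v s i + lam₂ * (gradient f (x s) i)^2)) s := by
      intro s hs
      exact (hv s hs i).const_sub _
    have hpos : ∀ s ≥ (1:ℝ), 0 ≤ (-(-lam₂ * v s i + lam₂ * (gradient f (x s) i)^2))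
        + lam₂ * (‖v 1‖ + (Real.sqrt (2*((L:ℝ)+1)*f (x 1)))^2 - v s i) := by
      intro s hs
      nlinarith [hgcb2 s hs i, norm_nonneg (v 1)]
    have h2 := exp_mul_mono hw hpos t ht
    have h3 : v 1 i ≤ ‖v 1‖ := le_trans (le_abs_self _) (coord_le_norm (v 1) i)
    nlinarith [Real.exp_pos (lam₂ * t), Real.exp_pos (lam₂ * 1), hG2]
  -- velocity bound
  have hvel : ∀ t ≥ (1:ℝ), ∀ i,
      |(1 / α t) * (μ t i / Real.sqrt (v t i))| ≤ (1/lam₁) * Real.sqrt (lam₁/lam₂) := by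
    intro t ht i
    rw [abs_mul]
    have h1 : |1 / α t| ≤ 1/lam₁ := by
      rw [hαinv t ht, abs_of_nonneg (div_nonneg (hDpos t ht).le (hNpos t ht).le)]
      rw [div_le_div_iff₀ (hNpos t ht) hlam₁0]
      nlinarith [hDle1 t ht, hNge t ht, hDpos t ht]
    have h2 : |μ t i / Real.sqrt (v t i)| ≤ Real.sqrt (lam₁/lam₂) := by
      rw [abs_div, abs_of_nonneg (Real.sqrt_nonneg (v t i)), div_le_iff₀ (hPpos t ht i)]
      calc |μ t i| = Real.sqrt ((μ t i)^2) := (Real.sqrt_sq_eq_abs _).symm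
      _ ≤ Real.sqrt (lam₁/lam₂ * v t i) := Real.sqrt_le_sqrt (hratio t ht i)
      _ = Real.sqrt (lam₁/lam₂) * Real.sqrt (v t i) := Real.sqrt_mul (by positivity) _
    exact mul_le_mul h1 h2 (abs_nonneg _) (by positivity)
  -- norm bounds
  have hμnorm : ∀ t ≥ (1:ℝ), ‖μ t‖ ≤ Real.sqrt d * Real.sqrt (2*((L:ℝ)+1)*f (x 1)) := by
    intro t ht
    apply euclid_norm_le _ _ hGnn
    intro i
    have h1 := hμb t ht i
    calc |μ t i| = Real.sqrt ((μ t i)^2) := (Real.sqrt_sq_eq_abs _).symm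
    _ ≤ Real.sqrt ((Real.sqrt (2*((L:ℝ)+1)*f (x 1)))^2) := Real.sqrt_le_sqrt h1
    _ = Real.sqrt (2*((L:ℝ)+1)*f (x 1)) := Real.sqrt_sq hGnn
  have hvnorm : ∀ t ≥ (1:ℝ), ‖v t‖
      ≤ Real.sqrt d * (‖v 1‖ + (Real.sqrt (2*((L:ℝ)+1)*f (x 1)))^2) := by
    intro t ht
    apply euclid_norm_le _ _ (by positivity)
    intro i
    rw [abs_of_nonneg (hvpos t ht i).le]
    exact hvb t ht i
  refine ⟨max (max (Real.sqrt (2*((L:ℝ)+1)*f (x 1)))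
      (Real.sqrt d * Real.sqrt (2*((L:ℝ)+1)*f (x 1))))
      (max (Real.sqrt d * (‖v 1‖ + (Real.sqrt (2*((L:ℝ)+1)*f (x 1)))^2))
      ((1/lam₁) * Real.sqrt (lam₁/lam₂))), ?_⟩
  intro t ht
  refine ⟨?_, ?_, ?_, ?_⟩
  · exact le_trans (hgb t ht) (le_max_of_le_left (le_max_left _ _))
  · exact le_trans (hμnorm t ht) (le_max_of_le_left (le_max_right _ _))
  · exact le_trans (hvnorm t ht) (le_max_of_le_right (le_max_left _ _))
  · intro i
    exact le_trans (hvel t ht i) (le_max_of_le_right (le_max_right _ _))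
end
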